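/- Let G be a Polish group acting continuously on a Polish space X, let C ⊆ X be closed, and suppose (x, G) ≤₂ (y, G). If x ∈ C^{ΔG} (i.e., there exist g ∈ G and an open neighborhood V of the identity with Vg·x ⊆ C), then y ∈ C^{ΔG}. -/

import Mathlib

/-- The relation `(x, U) ≤₂ (y, V)` from the Hjorth analysis of a continuous Polish
group action: for every nonempty open `U' ⊆ U` there is a nonempty open `V' ⊆ V` with
`V'·y ⊆ closure(U'·x)`. -/
def Le2 {G X : Type} [Group G] [TopologicalSpace G] [MulAction G X]
    [TopologicalSpace X] (x : X) (U : Set G) (y : X) (V : Set G) : Prop :=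
  ∀ U' : Set G, U' ⊆ U → IsOpen U' → U'.Nonempty →
    ∃ V' : Set G, V' ⊆ V ∧ IsOpen V' ∧ V'.Nonempty ∧
      (fun g => g • y) '' V' ⊆ closure ((fun g => g • x) '' U')

/-- Membership in the Vaught transform `C^{ΔG}` of a closed set `C`: there exist
`g ∈ G` and an open neighborhood `V` of the identity with `Vg·x ⊆ C`. -/
def MemDeltaG (G : Type) {X : Type} [Group G] [TopologicalSpace G] [MulAction G X]
    (C : Set X) (x : X) : Prop :=
  ∃ (g : G) (V : Set G), IsOpen V ∧ (1 : G) ∈ V ∧ ∀ v ∈ V, (v * g) • x ∈ C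

/-- for a continuous action of a Polish group `G` on a Polish space `X`,
a closed set `C ⊆ X`, and points with `(x, G) ≤₂ (y, G)`: if `x ∈ C^{ΔG}` then
`y ∈ C^{ΔG}`. -/
theorem deltaG_invariant_le2
    (G : Type) [Group G] [TopologicalSpace G] [PolishSpace G] [IsTopologicalGroup G]
    (X : Type) [TopologicalSpace X] [PolishSpace X]
    [MulAction G X] [ContinuousSMul G X]
    (C : Set X) (hC : IsClosed C) (x y : X)
    (hle : Le2 x (Set.univ : Set G) y (Set.univ : Set G))
    (hx : MemDeltaG G C x) : MemDeltaG G C y := by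
  obtain ⟨g, V, hVopen, hV1, hVC⟩ := hx
  -- U' = V * g is open, nonempty, and U' • x ⊆ C
  have hU'open : IsOpen ((fun v => v * g) '' V) :=
    (Homeomorph.mulRight g).isOpenMap V hVopen
  obtain ⟨V', -, hV'open, ⟨h, hh⟩, hV'sub⟩ :=
    hle ((fun v => v * g) '' V) (Set.subset_univ _) hU'open ⟨1 * g, 1, hV1, rfl⟩
  have hCsub : closure ((fun g => g • x) '' ((fun v => v * g) '' V)) ⊆ C := by
    apply closure_minimal _ hC
    rintro _ ⟨_, ⟨v, hv, rfl⟩, rfl⟩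
    exact hVC v hv
  refine ⟨h, (fun w => w * h⁻¹) '' V', (Homeomorph.mulRight h⁻¹).isOpenMap V' hV'open,
    ⟨h, hh, mul_inv_cancel h⟩, ?_⟩
  rintro _ ⟨w, hw, rfl⟩
  have : w • y ∈ closure ((fun g => g • x) '' ((fun v => v * g) '' V)) :=
    hV'sub ⟨w, hw, rfl⟩
  simpa [inv_mul_cancel_right] using hCsub this
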